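/- (Rudin's Lemma) Let P be a poset, C a nonempty lower subset of P, and ℱ a family of sets of the form ↑F with F a nonempty finite subset of P, such that ℱ is filtered under reverse inclusion (every two members of ℱ contain a common member of ℱ) and every member of ℱ meets C. Then there exists a directed subset D of C such that every member of ℱ meets ↓D. -/

import Mathlib

open Set

universe u

/-- A nonempty chain of sets, each of which meets a finite set `K`, has an intersection
meeting `K`. -/
lemma chain_sInter_inter_finite {P : Type u} {c : Set (Set P)} (hc : IsChain (· ⊆ ·) c)
    (hcne : c.Nonempty) {K : Set P} (hK : K.Finite)
    (h : ∀ M ∈ c, (M ∩ K).Nonempty) : ((⋂₀ c) ∩ K).Nonempty := by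
  set T : Set (Set P) := (fun M => M ∩ K) '' c with hT
  have hTfin : T.Finite := hK.finite_subsets.subset (by rintro t ⟨M, _, rfl⟩; exact inter_subset_right)
  have hTne : T.Nonempty := hcne.image _
  obtain ⟨t, ht, hmin⟩ := hTfin.exists_minimal hTne
  obtain ⟨M₀, hM₀, rfl⟩ := ht
  obtain ⟨a, haM₀, haK⟩ := h M₀ hM₀
  refine ⟨a, ?_, haK⟩
  rw [mem_sInter]
  intro M hM
  rcases eq_or_ne M M₀ with rfl | hne
  · exact haM₀
  · rcases hc hM hM₀ hne with h1 | h1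
    · have : M ∩ K = M₀ ∩ K :=
        le_antisymm (inter_subset_inter_left _ h1) (hmin ⟨M, hM, rfl⟩ (inter_subset_inter_left _ h1))
      have : a ∈ M ∩ K := this ▸ ⟨haM₀, haK⟩
      exact this.1
    · exact h1 haM₀

/-- Rudin's Lemma: if `C` is a nonempty lower subset of a poset `P` and
`ℱ` is a family of upper sets of nonempty finite sets that is filtered under reverse
inclusion and all of whose members meet `C`, then there is a directed `D ⊆ C` such that
every member of `ℱ` meets `↓D`. -/
theorem stmt5 {P : Type u} [PartialOrder P] (C : Set P) (hCne : C.Nonempty)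
    (hClow : IsLowerSet C) (ℱ : Set (Set P))
    (hform : ∀ S ∈ ℱ, ∃ F : Finset P, F.Nonempty ∧ S = {x | ∃ a ∈ F, a ≤ x})
    (hfilt : ∀ S₁ ∈ ℱ, ∀ S₂ ∈ ℱ, ∃ S₃ ∈ ℱ, S₃ ⊆ S₁ ∧ S₃ ⊆ S₂)
    (hmeet : ∀ S ∈ ℱ, (S ∩ C).Nonempty) :
    ∃ D ⊆ C, D.Nonempty ∧ DirectedOn (· ≤ ·) D ∧
      ∀ S ∈ ℱ, (S ∩ {x | ∃ d ∈ D, x ≤ d}).Nonempty := by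
  classical
  rcases Set.eq_empty_or_nonempty ℱ with hFe | hFne'
  · obtain ⟨c, hc⟩ := hCne
    exact ⟨{c}, by simpa using hc, ⟨c, rfl⟩,
      directedOn_singleton c, by simp [hFe]⟩
  choose F hFne hFS using hform
  -- A S hS : the elements of F S hS lying in C
  set A : ∀ S, S ∈ ℱ → Set P := fun S hS => {a | a ∈ F S hS ∧ a ∈ C} with hA
  have hAfin : ∀ S (hS : S ∈ ℱ), (A S hS).Finite := fun S hS =>
    (F S hS).finite_toSet.subset fun a ha => ha.1
  have hAC : ∀ S (hS : S ∈ ℱ), A S hS ⊆ C := fun S hS a ha => ha.2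
  have hAS : ∀ S (hS : S ∈ ℱ), A S hS ⊆ S := by
    intro S hS a ha
    rw [hFS S hS]
    exact ⟨a, ha.1, le_refl _⟩
  -- every element of C ∩ S is above an element of A S
  have hdown : ∀ S (hS : S ∈ ℱ), ∀ m ∈ C, m ∈ S → ∃ a ∈ A S hS, a ≤ m := by
    intro S hS m hmC hmS
    rw [hFS S hS] at hmS
    obtain ⟨a, haF, ham⟩ := hmS
    exact ⟨a, ⟨haF, hClow ham hmC⟩, ham⟩
  have hAne : ∀ S (hS : S ∈ ℱ), (A S hS).Nonempty := by
    intro S hS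
    obtain ⟨m, hmS, hmC⟩ := hmeet S hS
    obtain ⟨a, haA, -⟩ := hdown S hS m hmC hmS
    exact ⟨a, haA⟩
  set X : Set P := {x | ∃ S, ∃ hS : S ∈ ℱ, x ∈ A S hS} with hX
  have hXC : X ⊆ C := by rintro x ⟨S, hS, hx⟩; exact hAC S hS hx
  -- the Zorn family
  set Fam : Set (Set P) := {M | M ⊆ X ∧ (∀ S (hS : S ∈ ℱ), (M ∩ A S hS).Nonempty) ∧
      ∀ m ∈ M, ∀ S (hS : S ∈ ℱ), m ∈ S → ∃ a ∈ M ∩ A S hS, a ≤ m} with hFam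
  have hXFam : X ∈ Fam := by
    refine ⟨Subset.rfl, fun S hS => ?_, fun m hm S hS hmS => ?_⟩
    · obtain ⟨a, ha⟩ := hAne S hS
      exact ⟨a, ⟨S, hS, ha⟩, ha⟩
    · obtain ⟨a, haA, ham⟩ := hdown S hS m (hXC hm) hmS
      exact ⟨a, ⟨⟨S, hS, haA⟩, haA⟩, ham⟩
  obtain ⟨M, -, hMFam, hMmin⟩ : ∃ M, M ⊆ X ∧ Minimal (· ∈ Fam) M := by
    apply zorn_superset_nonempty Fam ?_ X hXFam
    intro c hcFam hchain hcne
    refine ⟨⋂₀ c, ⟨?_, fun S hS => ?_, fun m hm S hS hmS => ?_⟩, fun s hs => sInter_subset_of_mem hs⟩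
    · obtain ⟨M₀, hM₀⟩ := hcne
      exact (sInter_subset_of_mem hM₀).trans (hcFam hM₀).1
    · exact chain_sInter_inter_finite hchain hcne (hAfin S hS)
        (fun M hM => (hcFam hM).2.1 S hS)
    · have hKfin : ({a ∈ A S hS | a ≤ m} : Set P).Finite :=
        (hAfin S hS).subset fun a ha => ha.1
      have := chain_sInter_inter_finite hchain hcne hKfin (fun M hM => by
        obtain ⟨a, ⟨haM, haA⟩, ham⟩ := (hcFam hM).2.2 m (mem_sInter.1 hm M hM) S hS hmS
        exact ⟨a, haM, haA, ham⟩)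
      obtain ⟨a, haI, haA, ham⟩ := this
      exact ⟨a, ⟨haI, haA⟩, ham⟩
  obtain ⟨hMX, hMmeet, hMP⟩ := hMFam
  -- Claim 1: for each x ∈ M there is S₁ with M ∩ A S₁ ⊆ ↑x
  have claim1 : ∀ x ∈ M, ∃ S₁, ∃ hS₁ : S₁ ∈ ℱ, ∀ a ∈ M ∩ A S₁ hS₁, x ≤ a := by
    intro x hx
    by_contra hcon
    push_neg at hcon
    set M' : Set P := {m ∈ M | ¬ x ≤ m} with hM'
    have hM'Fam : M' ∈ Fam := by
      refine ⟨fun m hm => hMX hm.1, fun S hS => ?_, fun m hm S hS hmS => ?_⟩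
      · obtain ⟨a, ⟨haM, haA⟩, hax⟩ := hcon S hS
        exact ⟨a, ⟨haM, hax⟩, haA⟩
      · obtain ⟨a, ⟨haM, haA⟩, ham⟩ := hMP m hm.1 S hS hmS
        have : ¬ x ≤ a := fun h => hm.2 (h.trans ham)
        exact ⟨a, ⟨⟨haM, this⟩, haA⟩, ham⟩
    have hsub : M' ⊆ M := fun m hm => hm.1
    have := hMmin hM'Fam hsub
    exact (this hx).2 (le_refl x)
  -- Claim 2: the cone condition propagates down the family
  have claim2 : ∀ x S₁ (hS₁ : S₁ ∈ ℱ), (∀ a ∈ M ∩ A S₁ hS₁, x ≤ a) →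
      ∀ S (hS : S ∈ ℱ), S ⊆ S₁ → ∀ m ∈ M ∩ A S hS, x ≤ m := by
    intro x S₁ hS₁ h1 S hS hsub m hm
    have hmS₁ : m ∈ S₁ := hsub (hAS S hS hm.2)
    obtain ⟨a, haMA, ham⟩ := hMP m hm.1 S₁ hS₁ hmS₁
    exact (h1 a haMA).trans ham
  have hMdir : DirectedOn (· ≤ ·) M := by
    intro x hx y hy
    obtain ⟨S₁, hS₁, h1⟩ := claim1 x hx
    obtain ⟨S₂, hS₂, h2⟩ := claim1 y hy
    obtain ⟨S₃, hS₃, hsub₁, hsub₂⟩ := hfilt S₁ hS₁ S₂ hS₂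
    obtain ⟨z, hz⟩ := hMmeet S₃ hS₃
    exact ⟨z, hz.1, claim2 x S₁ hS₁ h1 S₃ hS₃ hsub₁ z hz,
      claim2 y S₂ hS₂ h2 S₃ hS₃ hsub₂ z hz⟩
  obtain ⟨S₀, hS₀⟩ := hFne'
  obtain ⟨d₀, hd₀⟩ := hMmeet S₀ hS₀
  refine ⟨M, fun m hm => hXC (hMX hm), ⟨d₀, hd₀.1⟩, hMdir, fun S hS => ?_⟩
  obtain ⟨d, hdM, hdA⟩ := hMmeet S hS
  exact ⟨d, hAS S hS hdA, d, hdM, le_refl d⟩
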